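/- For every t ∈ (0,1] and every convex set V ⊆ ℝⁿ containing 0, the image Ψ_t(V) of V under the map Ψ_t(x) = x/(1 + t‖x‖) is convex. -/

import Mathlib

private lemma subcombo_mem {E : Type*} [AddCommGroup E] [Module ℝ E] {V : Set E}
    (hV : Convex ℝ V) (h0 : (0:E) ∈ V) {x₁ x₂ : E} (hx₁ : x₁ ∈ V) (hx₂ : x₂ ∈ V)
    {a b : ℝ} (ha : 0 ≤ a) (hb : 0 ≤ b) (hab : a + b ≤ 1) :
    a • x₁ + b • x₂ ∈ V := by
  rcases eq_or_lt_of_le (add_nonneg ha hb) with hs | hs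
  · have ha0 : a = 0 := by linarith [hb]
    have hb0 : b = 0 := by linarith [ha]
    simpa [ha0, hb0] using h0
  · have hp : (a/(a+b)) • x₁ + (b/(a+b)) • x₂ ∈ V :=
      hV hx₁ hx₂ (by positivity) (by positivity) (by field_simp)
    have := hV h0 hp (by linarith : (0:ℝ) ≤ 1 - (a+b)) (le_of_lt hs) (by ring)
    simpa [smul_smul, smul_add, mul_div_cancel₀, ne_of_gt hs] using this

/-- The radial map `Ψ_t(x) = x/(1+t‖x‖)` maps convex sets containing the origin
to convex sets. -/
theorem psi_image_convex (n : ℕ) (t : ℝ) (ht : t ∈ Set.Ioc (0:ℝ) 1)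
    (Ψ : EuclideanSpace ℝ (Fin n) → EuclideanSpace ℝ (Fin n))
    (hΨ : ∀ x, Ψ x = (1 + t * ‖x‖)⁻¹ • x)
    (V : Set (EuclideanSpace ℝ (Fin n))) (hV : Convex ℝ V) (h0 : (0:EuclideanSpace ℝ (Fin n)) ∈ V) :
    Convex ℝ (Ψ '' V) := by
  obtain ⟨ht0, ht1⟩ := ht
  have hden : ∀ x : EuclideanSpace ℝ (Fin n), (0:ℝ) < 1 + t * ‖x‖ := fun x => by
    have := norm_nonneg x; nlinarith
  have hΨnorm : ∀ x : EuclideanSpace ℝ (Fin n), ‖Ψ x‖ = ‖x‖ / (1 + t * ‖x‖) := by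
    intro x
    rw [hΨ, norm_smul, Real.norm_eq_abs, abs_inv, abs_of_pos (hden x)]
    ring
  rintro y₁ ⟨x₁, hx₁, rfl⟩ y₂ ⟨x₂, hx₂, rfl⟩ l m hl hm hlm
  set d₁ : ℝ := 1 + t * ‖x₁‖ with hd₁
  set d₂ : ℝ := 1 + t * ‖x₂‖ with hd₂
  have hd₁0 : 0 < d₁ := hden x₁
  have hd₂0 : 0 < d₂ := hden x₂
  set q₁ : ℝ := ‖x₁‖ / d₁ with hq₁
  set q₂ : ℝ := ‖x₂‖ / d₂ with hq₂
  have hq₁0 : 0 ≤ q₁ := by positivity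
  have hq₂0 : 0 ≤ q₂ := by positivity
  have htq₁ : t * q₁ < 1 := by
    rw [hq₁, ← mul_div_assoc, div_lt_one hd₁0, hd₁]; linarith
  have htq₂ : t * q₂ < 1 := by
    rw [hq₂, ← mul_div_assoc, div_lt_one hd₂0, hd₂]; linarith
  set y : EuclideanSpace ℝ (Fin n) := l • Ψ x₁ + m • Ψ x₂ with hy
  set r : ℝ := ‖y‖ with hr
  have hr0 : 0 ≤ r := norm_nonneg y
  have hrle : r ≤ l * q₁ + m * q₂ := by
    calc r ≤ ‖l • Ψ x₁‖ + ‖m • Ψ x₂‖ := norm_add_le _ _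
    _ = l * q₁ + m * q₂ := by
        rw [norm_smul, norm_smul, Real.norm_eq_abs, Real.norm_eq_abs,
          abs_of_nonneg hl, abs_of_nonneg hm, hΨnorm, hΨnorm]
  have htr : t * r < 1 := by
    have h3 := mul_le_mul_of_nonneg_left hrle ht0.le
    rcases hl.eq_or_lt with hl0 | hl0
    · have hm1 : m = 1 := by linarith
      rw [← hl0, hm1] at h3
      simp at h3
      linarith
    · nlinarith [mul_lt_mul_of_pos_left htq₁ hl0, mul_le_mul_of_nonneg_left htq₂.le hm]
  have h1tr : 0 < 1 - t * r := by linarith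
  -- candidate preimage
  set x : EuclideanSpace ℝ (Fin n) := (1 - t * r)⁻¹ • y with hx
  have hnx : ‖x‖ = r / (1 - t * r) := by
    rw [hx, norm_smul, Real.norm_eq_abs, abs_inv, abs_of_pos h1tr, ← hr]; ring
  have hΨx : Ψ x = y := by
    rw [hΨ, hnx, hx, smul_smul]
    have : (1 + t * (r / (1 - t * r)))⁻¹ * (1 - t * r)⁻¹ = 1 := by
      field_simp
      ring
    rw [this, one_smul]
  -- x ∈ V
  have hinv₁ : d₁⁻¹ = 1 - t * q₁ := by rw [hq₁]; field_simp; ring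
  have hinv₂ : d₂⁻¹ = 1 - t * q₂ := by rw [hq₂]; field_simp; ring
  set a : ℝ := (1 - t * r)⁻¹ * (l * d₁⁻¹) with ha
  set b : ℝ := (1 - t * r)⁻¹ * (m * d₂⁻¹) with hb
  have ha0 : 0 ≤ a := by positivity
  have hb0 : 0 ≤ b := by positivity
  have hab : a + b ≤ 1 := by
    rw [ha, hb, hinv₁, hinv₂, ← mul_add]
    have h2 : l * (1 - t * q₁) + m * (1 - t * q₂) ≤ 1 - t * r := by nlinarith
    calc (1 - t * r)⁻¹ * (l * (1 - t * q₁) + m * (1 - t * q₂))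
        ≤ (1 - t * r)⁻¹ * (1 - t * r) := by
          apply mul_le_mul_of_nonneg_left h2 (by positivity)
      _ = 1 := inv_mul_cancel₀ (ne_of_gt h1tr)
  have hxcombo : x = a • x₁ + b • x₂ := by
    rw [hx, hy, hΨ x₁, hΨ x₂, ha, hb, ← hd₁, ← hd₂, smul_add, smul_smul, smul_smul,
      smul_smul, smul_smul]
    ring_nf
  have hxV : x ∈ V := by
    rw [hxcombo]
    exact subcombo_mem hV h0 hx₁ hx₂ ha0 hb0 hab
  exact ⟨x, hxV, hΨx⟩
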